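/- For all natural numbers p ≥ 2 and q ≥ 2 there exists a unital star-algebra homomorphism from M_2(ℂ) × M_3(ℂ) to M_p(ℂ) × M_q(ℂ). -/
import Mathlib

open Matrix

noncomputable section

/-- Amplification `M_k → M_k ⊗ 1_c` as a ring hom. -/
def ampl (k c : ℕ) : Matrix (Fin k) (Fin k) ℂ →+* Matrix (Fin k × Fin c) (Fin k × Fin c) ℂ :=
  (blockDiagonalRingHom (Fin k) (Fin c) ℂ).comp (Pi.constRingHom (Fin c) _)

theorem ampl_smul (k c : ℕ) (r : ℂ) (A : Matrix (Fin k) (Fin k) ℂ) :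
    ampl k c (r • A) = r • ampl k c A := by
  show blockDiagonal (fun _ : Fin c => r • A) = r • blockDiagonal (fun _ : Fin c => A)
  exact blockDiagonal_smul r fun _ => A

theorem ampl_star (k c : ℕ) (A : Matrix (Fin k) (Fin k) ℂ) :
    ampl k c Aᴴ = (ampl k c A)ᴴ := by
  show blockDiagonal (fun _ : Fin c => Aᴴ) = (blockDiagonal fun _ : Fin c => A)ᴴ
  exact (blockDiagonal_conjTranspose fun _ => A).symm

/-- The block-diagonal embedding of `M₂ × M₃` into matrices indexed by
`(Fin 2 × Fin a) ⊕ (Fin 3 × Fin b)`. -/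
def auxHom (a b : ℕ) :
    (Matrix (Fin 2) (Fin 2) ℂ × Matrix (Fin 3) (Fin 3) ℂ) →⋆ₐ[ℂ]
      Matrix ((Fin 2 × Fin a) ⊕ (Fin 3 × Fin b)) ((Fin 2 × Fin a) ⊕ (Fin 3 × Fin b)) ℂ where
  toFun x := fromBlocks (ampl 2 a x.1) 0 0 (ampl 3 b x.2)
  map_one' := by simp [fromBlocks_one]
  map_mul' x y := by simp [fromBlocks_multiply]
  map_zero' := by
    simp only [Prod.fst_zero, Prod.snd_zero, map_zero]
    ext (i | i) (j | j) <;> simp [fromBlocks]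
  map_add' x y := by
    simp only [Prod.fst_add, Prod.snd_add, map_add]
    ext (i | i) (j | j) <;> simp [fromBlocks]
  commutes' c := by
    simp only [Algebra.algebraMap_eq_smul_one, Prod.smul_def, Prod.fst_one, Prod.snd_one,
      ampl_smul, _root_.map_one]
    rw [show (1 : Matrix ((Fin 2 × Fin a) ⊕ (Fin 3 × Fin b)) _ ℂ) =
      fromBlocks 1 0 0 1 from fromBlocks_one.symm, fromBlocks_smul]
    simp
  map_star' x := by
    simp [star_eq_conjTranspose, fromBlocks_conjTranspose, ampl_star]

/-- Reindexing as a star algebra hom. -/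
def reindexStarHom {m n : Type*} [Fintype m] [Fintype n] [DecidableEq m] [DecidableEq n]
    (e : m ≃ n) : Matrix m m ℂ →⋆ₐ[ℂ] Matrix n n ℂ :=
  { (reindexAlgEquiv ℂ ℂ e).toAlgHom with
    map_star' := fun M => conjTranspose_reindex e e M }

theorem exists_ab (n : ℕ) (hn : 2 ≤ n) : ∃ a b : ℕ, 2 * a + 3 * b = n := by
  rcases Nat.even_or_odd n with ⟨k, hk⟩ | ⟨k, hk⟩
  · exact ⟨k, 0, by omega⟩
  · exact ⟨k - 1, 1, by omega⟩

def toM (n : ℕ) (hn : 2 ≤ n) :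
    (Matrix (Fin 2) (Fin 2) ℂ × Matrix (Fin 3) (Fin 3) ℂ) →⋆ₐ[ℂ] Matrix (Fin n) (Fin n) ℂ :=
  (reindexStarHom (((finProdFinEquiv.sumCongr finProdFinEquiv).trans finSumFinEquiv).trans
    (finCongr (exists_ab n hn).choose_spec.choose_spec))).comp
    (auxHom (exists_ab n hn).choose (exists_ab n hn).choose_spec.choose)

end

theorem stmt_2 (p q : ℕ) (hp : 2 ≤ p) (hq : 2 ≤ q) :
    Nonempty ((Matrix (Fin 2) (Fin 2) ℂ × Matrix (Fin 3) (Fin 3) ℂ) →⋆ₐ[ℂ]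
      (Matrix (Fin p) (Fin p) ℂ × Matrix (Fin q) (Fin q) ℂ)) := by
  exact ⟨StarAlgHom.prod (toM p hp) (toM q hq)⟩
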